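/- Let γ > 0 and 0 < c < 2/3. Let 1 ≥ x_1 > x_2 > ... > x_k > 0 be a k-portfolio that satisfies the FOC recurrence x_{i+1} = 2x_i - x_{i-1} + γ(2x_i - 3x_i²) for 1 ≤ i ≤ k (with x_0 = 1, x_{k+1} = 0) and with the property that removing any single school does not increase U_γ. Then the number of indices i with x_i > c is at most m(γ,c), where m(γ,c) = 2 + 1/(3γ) + (2/3 - c)/√(γ c²(1-c)) if 0 < γ < 1/3, and m(γ,c) = 2 + (2/3 - c)/√(γ c²(1-c)) if γ ≥ 1/3. -/
import Mathlib


open Finset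

/-- Perceived expected utility of the k-portfolio `x 1 > x 2 > ⋯ > x k`
(with the convention `x 0 = 1`). -/
noncomputable def U (γ : ℝ) (k : ℕ) (x : ℕ → ℝ) : ℝ :=
  ∑ i ∈ Finset.Icc 1 k, (-γ * (1 - x i) * (x i) ^ 2 + x i * (x (i - 1) - x i))

/-- The (k-1)-portfolio obtained from `x` by dropping the i-th school. -/
def dropAt (x : ℕ → ℝ) (i : ℕ) : ℕ → ℝ :=
  fun j => if j < i then x j else x (j + 1)

/-- The bound `m(γ,c)` on the number of schools above `c` in an optimal portfolio. -/
noncomputable def mBound (γ c : ℝ) : ℝ :=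
  if γ < 1 / 3 then 2 + 1 / (3 * γ) + (2 / 3 - c) / Real.sqrt (γ * c ^ 2 * (1 - c))
  else 2 + (2 / 3 - c) / Real.sqrt (γ * c ^ 2 * (1 - c))

set_option maxHeartbeats 1000000

lemma drop_diff (γ : ℝ) (k : ℕ) (x : ℕ → ℝ) (hxk1 : x (k+1) = 0) (i : ℕ)
    (h1 : 1 ≤ i) (hik : i ≤ k) :
    U γ k x - U γ (k - 1) (dropAt x i) =
      (x (i-1) - x i) * (x i - x (i+1)) - γ * (x i)^2 * (1 - x i) := by
  set f : ℕ → ℝ := fun j => -γ * (1 - x j) * (x j) ^ 2 + x j * (x (j - 1) - x j) with hf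
  have hk1 : 1 ≤ k := le_trans h1 hik
  have hIcc : Finset.Icc 1 (k-1) = Finset.Ico 1 k := by
    rw [← Finset.Ico_add_one_right_eq_Icc]
    congr 1
    omega
  have hU : U γ k x = ∑ j ∈ Finset.Ico 1 (k+1), f j := by
    rw [U, Finset.Ico_add_one_right_eq_Icc]
  have hUd : U γ (k-1) (dropAt x i) = ∑ j ∈ Finset.Ico 1 k,
      (-γ * (1 - dropAt x i j) * (dropAt x i j) ^ 2 +
        dropAt x i j * (dropAt x i (j - 1) - dropAt x i j)) := by
    rw [U, hIcc]
  by_cases hik' : i < k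
  · -- main case i < k
    have hsplitU : ∑ j ∈ Finset.Ico 1 (k+1), f j =
        (∑ j ∈ Finset.Ico 1 i, f j) + f i + f (i+1) + ∑ j ∈ Finset.Ico (i+2) (k+1), f j := by
      rw [← Finset.sum_Ico_consecutive f h1 (by omega : i ≤ k+1)]
      rw [Finset.sum_eq_sum_Ico_succ_bot (by omega : i < k+1) f]
      rw [Finset.sum_eq_sum_Ico_succ_bot (by omega : i+1 < k+1) f]
      ring
    have hsplitD : ∑ j ∈ Finset.Ico 1 k,
        (-γ * (1 - dropAt x i j) * (dropAt x i j) ^ 2 +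
          dropAt x i j * (dropAt x i (j - 1) - dropAt x i j)) =
        (∑ j ∈ Finset.Ico 1 i, f j) +
          (-γ * (1 - x (i+1)) * (x (i+1)) ^ 2 + x (i+1) * (x (i-1) - x (i+1))) +
          ∑ j ∈ Finset.Ico (i+2) (k+1), f j := by
      set t : ℕ → ℝ := fun j => (-γ * (1 - dropAt x i j) * (dropAt x i j) ^ 2 +
          dropAt x i j * (dropAt x i (j - 1) - dropAt x i j)) with ht
      rw [← Finset.sum_Ico_consecutive t h1 (by omega : i ≤ k)]
      rw [Finset.sum_eq_sum_Ico_succ_bot (by omega : i < k) t]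
      have e1 : ∑ j ∈ Finset.Ico 1 i, t j = ∑ j ∈ Finset.Ico 1 i, f j := by
        refine Finset.sum_congr rfl fun j hj => ?_
        have hj' := Finset.mem_Ico.mp hj
        simp only [ht, hf, dropAt, if_pos (by omega : j < i), if_pos (by omega : j - 1 < i)]
      have e2 : t i = -γ * (1 - x (i+1)) * (x (i+1)) ^ 2 + x (i+1) * (x (i-1) - x (i+1)) := by
        simp only [ht, dropAt, if_neg (by omega : ¬ i < i), if_pos (by omega : i - 1 < i)]
      have e3 : ∑ j ∈ Finset.Ico (i+1) k, t j = ∑ j ∈ Finset.Ico (i+2) (k+1), f j := by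
        rw [Finset.sum_Ico_eq_sum_range, Finset.sum_Ico_eq_sum_range]
        have hcard : k - (i+1) = k + 1 - (i+2) := by omega
        rw [← hcard]
        refine Finset.sum_congr rfl fun j hj => ?_
        have hj' := Finset.mem_range.mp hj
        have h1j : ¬ (i + 1 + j < i) := by omega
        have h2j : ¬ (i + 1 + j - 1 < i) := by omega
        simp only [ht, hf, dropAt, if_neg h1j, if_neg h2j]
        have e4 : i + 1 + j - 1 + 1 = i + 1 + j := by omega
        have e5 : i + 1 + j + 1 - 1 = i + 1 + j := by omega
        have e6 : i + 2 + j = i + 1 + j + 1 := by omega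
        rw [e4, e6, e5]
      rw [e1, e2, e3]
      ring
    rw [hU, hUd, hsplitU, hsplitD]
    have hii : i + 1 - 1 = i := by omega
    simp only [hf, hii]
    ring
  · -- case i = k
    have hik2 : i = k := by omega
    subst hik2
    have hsplitU : ∑ j ∈ Finset.Ico 1 (i+1), f j = (∑ j ∈ Finset.Ico 1 i, f j) + f i :=
      Finset.sum_Ico_succ_top h1 f
    have hsplitD : ∑ j ∈ Finset.Ico 1 i,
        (-γ * (1 - dropAt x i j) * (dropAt x i j) ^ 2 +
          dropAt x i j * (dropAt x i (j - 1) - dropAt x i j)) =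
        ∑ j ∈ Finset.Ico 1 i, f j := by
      refine Finset.sum_congr rfl fun j hj => ?_
      have hj' := Finset.mem_Ico.mp hj
      simp only [hf, dropAt, if_pos (by omega : j < i), if_pos (by omega : j - 1 < i)]
    rw [hU, hUd, hsplitU, hsplitD, hxk1]
    simp only [hf]
    ring

lemma seg_lemma (k : ℕ) (P : ℕ → Prop) [DecidablePred P]
    (h : ∀ i j, 1 ≤ i → i ≤ j → j ≤ k → P j → P i) :
    (Finset.Icc 1 k).filter P = Finset.Icc 1 (((Finset.Icc 1 k).filter P).card) := by
  set A := (Finset.Icc 1 k).filter P with hA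
  rcases A.eq_empty_or_nonempty with he | hne
  · simp [he]
  · have hmax := A.max'_mem hne
    have hmem := Finset.mem_filter.mp hmax
    have hmik := Finset.mem_Icc.mp hmem.1
    have hsub : A = Finset.Icc 1 (A.max' hne) := by
      apply Finset.Subset.antisymm
      · intro i hi
        have hi' := Finset.mem_filter.mp hi
        have := Finset.mem_Icc.mp hi'.1
        exact Finset.mem_Icc.mpr ⟨this.1, A.le_max' i hi⟩
      · intro j hj
        have hj' := Finset.mem_Icc.mp hj
        refine Finset.mem_filter.mpr ⟨Finset.mem_Icc.mpr ⟨hj'.1, le_trans hj'.2 hmik.2⟩, ?_⟩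
        exact h j (A.max' hne) hj'.1 hj'.2 hmik.2 hmem.2
    have hcard : A.card = A.max' hne := by
      conv_lhs => rw [hsub]
      rw [Nat.card_Icc]
      omega
    rw [hcard, ← hsub]

/-- Let γ > 0 and 0 < c < 2/3. If the k-portfolio
`1 ≥ x_1 > ⋯ > x_k > 0` satisfies the FOC recurrence (with `x_0 = 1`, `x_{k+1} = 0`)
and dropping any single school does not increase `U_γ`, then the number of indices
with `x_i > c` is at most `m(γ,c)`. -/
theorem stmt_10 (γ : ℝ) (hγ : 0 < γ) (c : ℝ) (hc0 : 0 < c) (hc : c < 2 / 3)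
    (k : ℕ) (x : ℕ → ℝ)
    (hx0 : x 0 = 1) (hxk1 : x (k + 1) = 0) (hx1 : x 1 ≤ 1)
    (hdec : ∀ i, 1 ≤ i → i < k → x (i + 1) < x i) (hpos : 0 < x k)
    (hrec : ∀ i, 1 ≤ i → i ≤ k →
      x (i + 1) = 2 * x i - x (i - 1) + γ * (2 * x i - 3 * (x i) ^ 2))
    (hdrop : ∀ i, 1 ≤ i → i ≤ k → U γ (k - 1) (dropAt x i) ≤ U γ k x) :
    ((((Finset.Icc 1 k).filter fun i => c < x i).card : ℝ)) ≤ mBound γ c := by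
  have hkey : ∀ i, 1 ≤ i → i ≤ k →
      γ * (x i)^2 * (1 - x i) ≤ (x (i-1) - x i) * (x i - x (i+1)) := by
    intro i h1 h2
    have hd := hdrop i h1 h2
    have he := drop_diff γ k x hxk1 i h1 h2
    linarith
  have hmono : ∀ i j, 1 ≤ i → i ≤ j → j ≤ k → x j ≤ x i := by
    intro i j hi hij hjk
    induction j, hij using Nat.le_induction with
    | base => exact le_rfl
    | succ n hn ih =>
      have h1 := hdec n (le_trans hi hn) (by omega)
      have h2 := ih (by omega)
      linarith
  set S := (Finset.Icc 1 k).filter (fun i => c < x i) with hSdef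
  set T := (Finset.Icc 1 k).filter (fun i => 2/3 < x i) with hTdef
  set N := S.card with hNdef
  set M := T.card with hMdef
  have hS : S = Finset.Icc 1 N :=
    seg_lemma k _ (fun i j h1 hij hjk hPj => lt_of_lt_of_le hPj (hmono i j h1 hij hjk))
  have hT : T = Finset.Icc 1 M :=
    seg_lemma k _ (fun i j h1 hij hjk hPj => lt_of_lt_of_le hPj (hmono i j h1 hij hjk))
  have hTS : T ⊆ S := by
    intro a ha
    have ha' := Finset.mem_filter.mp ha
    exact Finset.mem_filter.mpr ⟨ha'.1, by linarith [ha'.2]⟩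
  have hMN : M ≤ N := Finset.card_le_card hTS
  have hNk : N ≤ k := by
    have h1 : S ⊆ Finset.Icc 1 k := by rw [hSdef]; exact Finset.filter_subset _ _
    have h2 := Finset.card_le_card h1
    rw [Nat.card_Icc] at h2
    omega
  have hMk : M ≤ k := le_trans hMN hNk
  have hmemS : ∀ i, 1 ≤ i → i ≤ N → c < x i := by
    intro i h1 h2
    have : i ∈ S := by rw [hS]; exact Finset.mem_Icc.mpr ⟨h1, h2⟩
    exact (Finset.mem_filter.mp this).2
  have hmemT : ∀ i, 1 ≤ i → i ≤ M → 2/3 < x i := by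
    intro i h1 h2
    have : i ∈ T := by rw [hT]; exact Finset.mem_Icc.mpr ⟨h1, h2⟩
    exact (Finset.mem_filter.mp this).2
  have hnotT : ∀ i, M + 1 ≤ i → i ≤ k → x i ≤ 2/3 := by
    intro i h1 h2
    by_contra hgt
    push_neg at hgt
    have : i ∈ T := Finset.mem_filter.mpr ⟨Finset.mem_Icc.mpr ⟨by omega, h2⟩, hgt⟩
    rw [hT] at this
    have := Finset.mem_Icc.mp this
    omega
  set D := Real.sqrt (γ * c^2 * (1 - c)) with hDdef
  have hprod : 0 < γ * c^2 * (1 - c) := by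
    have h1 : 0 < 1 - c := by linarith
    positivity
  have hDpos : 0 < D := Real.sqrt_pos.mpr hprod
  have hD2 : D^2 = γ * c^2 * (1 - c) := Real.sq_sqrt hprod.le
  -- Claim 1 : M ≤ 1 + 1/(3γ)
  have hMbound : (M:ℝ) ≤ 1 + 1/(3*γ) := by
    by_cases hM2 : 2 ≤ M
    · have hk2 : 2 ≤ k := le_trans hM2 hMk
      have hx1T : 2/3 < x 1 := hmemT 1 (by omega) (by omega)
      have hxM : 2/3 < x M := hmemT M (by omega) le_rfl
      have hd2 : γ * (x 1)^2 ≤ x 1 - x 2 := by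
        rcases lt_or_eq_of_le hx1 with hlt | heq
        · have hkk := hkey 1 le_rfl (by omega)
          rw [show (1:ℕ) - 1 = 0 from rfl, hx0] at hkk
          have h0 : (0:ℝ) < 1 - x 1 := by linarith
          nlinarith [hkk, h0]
        · have hr := hrec 1 le_rfl (by omega)
          rw [show (1:ℕ) - 1 = 0 from rfl, hx0, heq] at hr
          norm_num at hr
          rw [heq, hr]
          norm_num
      have hchain : ∀ i, 1 ≤ i → i + 1 ≤ M → γ * (x 1)^2 ≤ x i - x (i+1) := by
        intro i hi
        induction i, hi using Nat.le_induction with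
        | base => intro _; exact hd2
        | succ n hn ih =>
          intro hsucc
          have ihh := ih (by omega)
          have hr := hrec (n+1) (by omega) (by omega)
          rw [Nat.add_sub_cancel] at hr
          have hxn : 2/3 < x (n+1) := hmemT (n+1) (by omega) (by omega)
          have hxpos' : (0:ℝ) ≤ γ * (3*(x (n+1))^2 - 2*(x (n+1))) := by
            apply mul_nonneg hγ.le
            nlinarith
          linarith [hr]
      have htel : ∑ i ∈ Finset.Ico 1 M, (x i - x (i+1)) = x 1 - x M := by
        have h1 : ∀ n, ∑ i ∈ Finset.range n, ((-x (i+1)) - (-x i)) = -x n - (-x 0) :=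
          fun n => Finset.sum_range_sub (fun j => -x j) n
        have h2 := Finset.sum_Ico_eq_sub (fun i => (-x (i+1)) - (-x i)) (show 1 ≤ M by omega)
        rw [h1 M, h1 1] at h2
        have h3 : ∑ i ∈ Finset.Ico 1 M, (x i - x (i+1))
            = ∑ i ∈ Finset.Ico 1 M, ((-x (i+1)) - (-x i)) :=
          Finset.sum_congr rfl (fun i _ => by ring)
        rw [h3, h2]
        ring
      have hlb : (Finset.Ico 1 M).card • (γ * (x 1)^2) ≤ ∑ i ∈ Finset.Ico 1 M, (x i - x (i+1)) :=
        Finset.card_nsmul_le_sum _ _ _ (fun i hi => by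
          have hi' := Finset.mem_Ico.mp hi
          exact hchain i hi'.1 hi'.2)
      rw [Nat.card_Ico, htel, nsmul_eq_mul] at hlb
      have hcast : ((M - 1 : ℕ) : ℝ) = (M:ℝ) - 1 := by
        have h1 : (1:ℕ) ≤ M := by omega
        push_cast [Nat.cast_sub h1]
        ring
      rw [hcast] at hlb
      have hMreal : (2:ℝ) ≤ (M:ℝ) := by exact_mod_cast hM2
      have hfac : (0:ℝ) ≤ (1 - x 1) * (2 - x 1) :=
        mul_nonneg (by linarith) (by linarith)
      by_contra hcon
      push_neg at hcon
      have h3γ : (0:ℝ) < 3*γ := by linarith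
      have hd : 1/(3*γ) < (M:ℝ) - 1 := by linarith
      have h1 : 1 < ((M:ℝ) - 1) * (3*γ) := by
        rw [div_lt_iff₀ h3γ] at hd
        linarith
      have hm : (0:ℝ) < (M:ℝ) - 1 := by linarith
      have hmg : (0:ℝ) < ((M:ℝ) - 1) * γ := mul_pos hm hγ
      nlinarith [mul_nonneg hmg.le hfac,
        mul_pos (show (0:ℝ) < 3*((M:ℝ)-1)*γ - 1 by linarith)
          (show (0:ℝ) < 3*(x 1) - 2 by linarith),
        hlb, hxM]
    · have hM1 : (M:ℝ) ≤ 1 := by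
        have : M ≤ 1 := by omega
        exact_mod_cast this
      have : 0 < 1/(3*γ) := by positivity
      linarith
  -- Claim 1' : if γ ≥ 1/3 then M ≤ 1
  have hMone : 1/3 ≤ γ → (M:ℝ) ≤ 1 := by
    intro hγ3
    by_contra hcon
    push_neg at hcon
    have hM2 : 2 ≤ M := by
      by_contra h
      push_neg at h
      have : (M:ℝ) ≤ 1 := by exact_mod_cast Nat.lt_succ_iff.mp (by omega)
      linarith
    have hk2 : 2 ≤ k := le_trans hM2 hMk
    have hx2T : 2/3 < x 2 := hmemT 2 (by omega) hM2
    have hx12 : x 2 < x 1 := hdec 1 le_rfl (by omega)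
    have hx1gt : 2/3 < x 1 := lt_trans hx2T hx12
    have hr := hrec 1 le_rfl (by omega)
    rw [show (1:ℕ) - 1 = 0 from rfl, hx0] at hr
    have hf1 : (0:ℝ) ≤ (γ - 1/3) * (3*(x 1)^2 - 2*(x 1)) :=
      mul_nonneg (by linarith) (by nlinarith)
    have hf2 : (0:ℝ) ≤ (1 - x 1) * (5/3 - x 1) :=
      mul_nonneg (by linarith) (by linarith)
    nlinarith [hr, hx2T, hf1, hf2]
  -- Claim 2 : N ≤ M + 1 + (2/3 - c)/D
  have hE : 0 ≤ (2/3 - c)/D := div_nonneg (by linarith) hDpos.le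
  have hN2 : (N:ℝ) ≤ (M:ℝ) + 1 + (2/3 - c)/D := by
    by_cases hNM : M < N
    · have hxM1le : x (M+1) ≤ 2/3 := hnotT (M+1) le_rfl (by omega)
      have hxNc : c < x N := hmemS N (by omega) le_rfl
      have hgap : ∀ i ∈ Finset.Ico (M+1) N, D ≤ x i - x (i+1) := by
        intro i hi
        have hi' := Finset.mem_Ico.mp hi
        have hj1 : 1 ≤ i + 1 := by omega
        have hjk : i + 1 ≤ k := by omega
        have hxjc : c < x (i+1) := hmemS (i+1) hj1 (by omega)
        have hxj23 : x (i+1) ≤ 2/3 := hnotT (i+1) (by omega) hjk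
        have hdj : 0 < x i - x (i+1) := by
          have := hdec i (by omega) (by omega)
          linarith
        have hk2 := hkey (i+1) hj1 hjk
        rw [Nat.add_sub_cancel] at hk2
        have hr := hrec (i+1) hj1 hjk
        rw [Nat.add_sub_cancel] at hr
        have hmon : x (i+1) - x (i+1+1) ≤ x i - x (i+1) := by
          have hneg : γ * (3*(x (i+1))^2 - 2*(x (i+1))) ≤ 0 :=
            mul_nonpos_of_nonneg_of_nonpos hγ.le (by nlinarith)
          nlinarith [hr, hneg]
        have hcx : γ * c^2 * (1 - c) ≤ γ * (x (i+1))^2 * (1 - x (i+1)) := by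
          have h1 : c ≤ x (i+1) := hxjc.le
          have h2 : c^2 * (1 - c) ≤ (x (i+1))^2 * (1 - x (i+1)) := by
            have ha : (0:ℝ) ≤ x (i+1) - c := by linarith
            have hb : (0:ℝ) ≤ 2/3 - x (i+1) := by linarith
            have hxnn : (0:ℝ) ≤ x (i+1) := by linarith
            nlinarith [sq_nonneg (x (i+1) - c),
              mul_nonneg (mul_nonneg ha hxnn) hb,
              mul_nonneg (mul_nonneg ha hc0.le) hb,
              mul_nonneg (mul_nonneg ha hc0.le) (show (0:ℝ) ≤ 2/3 - c by linarith)]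
          have h3 := mul_le_mul_of_nonneg_left h2 hγ.le
          linarith [h3]
        have hsq : D^2 ≤ (x i - x (i+1))^2 := by
          rw [hD2]
          calc γ * c^2 * (1 - c) ≤ γ * (x (i+1))^2 * (1 - x (i+1)) := hcx
            _ ≤ (x i - x (i+1)) * (x (i+1) - x (i+1+1)) := hk2
            _ ≤ (x i - x (i+1))^2 := by nlinarith [hmon, hdj]
        calc D = Real.sqrt (D^2) := (Real.sqrt_sq hDpos.le).symm
          _ ≤ Real.sqrt ((x i - x (i+1))^2) := Real.sqrt_le_sqrt hsq
          _ = x i - x (i+1) := Real.sqrt_sq hdj.le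
      have htel2 : ∑ i ∈ Finset.Ico (M+1) N, (x i - x (i+1)) = x (M+1) - x N := by
        have h1 : ∀ n, ∑ i ∈ Finset.range n, ((-x (i+1)) - (-x i)) = -x n - (-x 0) :=
          fun n => Finset.sum_range_sub (fun j => -x j) n
        have h2 := Finset.sum_Ico_eq_sub (fun i => (-x (i+1)) - (-x i)) (show M+1 ≤ N by omega)
        rw [h1 N, h1 (M+1)] at h2
        have h3 : ∑ i ∈ Finset.Ico (M+1) N, (x i - x (i+1))
            = ∑ i ∈ Finset.Ico (M+1) N, ((-x (i+1)) - (-x i)) :=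
          Finset.sum_congr rfl (fun i _ => by ring)
        rw [h3, h2]
        ring
      have hlb2 : (Finset.Ico (M+1) N).card • D ≤ ∑ i ∈ Finset.Ico (M+1) N, (x i - x (i+1)) :=
        Finset.card_nsmul_le_sum _ _ _ hgap
      rw [Nat.card_Ico, htel2, nsmul_eq_mul] at hlb2
      have hcast2 : ((N - (M+1) : ℕ) : ℝ) = (N:ℝ) - (M:ℝ) - 1 := by
        have h1 : M + 1 ≤ N := by omega
        push_cast [Nat.cast_sub h1]
        ring
      rw [hcast2] at hlb2
      have hsum : ((N:ℝ) - (M:ℝ) - 1) * D ≤ 2/3 - c := by linarith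
      have hfin : (N:ℝ) - (M:ℝ) - 1 ≤ (2/3 - c)/D := (le_div_iff₀ hDpos).mpr hsum
      linarith
    · have : N = M := by omega
      rw [this]
      linarith
  -- conclude
  unfold mBound
  rw [← hDdef]
  split_ifs with hγ3
  · linarith
  · push_neg at hγ3
    have := hMone (by linarith)
    linarith
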